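/- In a finite simple graph with no even cycle, any two distinct cycles are edge-disjoint (equivalently, every such graph is a cactus: every block is an edge or a cycle). -/

import Mathlib

open Polynomial

/-- Number of matchings with exactly `k` edges in `G`. -/
noncomputable def matchingCount {V : Type*} [Fintype V] (G : SimpleGraph V) (k : ℕ) : ℕ :=
  Nat.card {s : Finset (Sym2 V) // s.card = k ∧ (∀ e ∈ s, e ∈ G.edgeSet) ∧
    ∀ e ∈ s, ∀ f ∈ s, e ≠ f → ∀ x : V, x ∈ e → x ∉ f}

/-- The matching polynomial `m(G,x) = ∑ (-1)^k m_k(G) x^(n-2k)`. -/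
noncomputable def matchPoly {V : Type*} [Fintype V] (G : SimpleGraph V) : Polynomial ℝ :=
  ∑ k ∈ Finset.range (Fintype.card V + 1),
    Polynomial.C ((-1 : ℝ) ^ k * (matchingCount G k : ℝ)) *
      Polynomial.X ^ (Fintype.card V - 2 * k)

/-- The maximum real root `t(G)` of the matching polynomial. -/
noncomputable def maxRoot {V : Type*} [Fintype V] (G : SimpleGraph V) : ℝ :=
  sSup {x : ℝ | (matchPoly G).eval x = 0}


namespace OddCycleAux

open SimpleGraph

variable {V : Type*} {G : SimpleGraph V}

lemma dropLast_support_cons {a c b : V} (h : G.Adj a c) (w : G.Walk c b) :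
    (SimpleGraph.Walk.cons h w).support.dropLast = a :: w.support.dropLast := by
  rw [SimpleGraph.Walk.support_cons]
  obtain ⟨x, l, hl⟩ := List.exists_cons_of_ne_nil (SimpleGraph.Walk.support_ne_nil w)
  rw [hl]
  rfl

lemma support_eq_dropLast_concat {a b : V} (w : G.Walk a b) :
    w.support = w.support.dropLast ++ [b] := by
  induction w with
  | nil => rfl
  | cons h w ih =>
    rw [dropLast_support_cons, SimpleGraph.Walk.support_cons, List.cons_append, ← ih]

lemma mem_dropLast_or_end {a b v : V} (w : G.Walk a b) (hv : v ∈ w.support) :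
    v ∈ w.support.dropLast ∨ v = b := by
  rw [support_eq_dropLast_concat] at hv
  rw [List.mem_append, List.mem_singleton] at hv
  exact hv

lemma exists_mem_dropLast_of_mem_edges {a b : V} (w : G.Walk a b) {g : Sym2 V}
    (hg : g ∈ w.edges) : ∃ x, x ∈ g ∧ x ∈ w.support.dropLast := by
  induction w with
  | nil => simp at hg
  | cons h w ih =>
    rw [SimpleGraph.Walk.edges_cons, List.mem_cons] at hg
    rw [dropLast_support_cons]
    rcases hg with rfl | hg
    · exact ⟨_, Sym2.mem_mk_left _ _, List.mem_cons_self⟩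
    · obtain ⟨x, hx1, hx2⟩ := ih hg
      exact ⟨x, hx1, List.mem_cons_of_mem _ hx2⟩

lemma mem_support_of_mem_edges' {a b : V} (w : G.Walk a b) {g : Sym2 V} (hg : g ∈ w.edges)
    {v : V} (hv : v ∈ g) : v ∈ w.support := by
  induction g with
  | _ x y =>
    rcases Sym2.mem_iff.1 hv with rfl | rfl
    · exact w.fst_mem_support_of_mem_edges hg
    · exact w.snd_mem_support_of_mem_edges hg


/-- An "ear" relative to the closed walk `c`: a nontrivial path whose endpoints lie on `c`,
whose edges avoid `c`, and whose interior avoids `c`. -/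
def ExistsEar {u0 : V} (c : G.Walk u0 u0) : Prop :=
  ∃ (a' b' : V) (H : G.Walk a' b'), H.IsPath ∧ 1 ≤ H.length ∧ a' ∈ c.support ∧ b' ∈ c.support ∧
    (∀ g ∈ H.edges, g ∉ c.edges) ∧ (∀ v ∈ H.support, v ∈ c.support → v = a' ∨ v = b')

lemma exists_prefix_to_support {u0 : V} (c : G.Walk u0 u0) {z b : V} (t : G.Walk z b)
    (hb : b ∈ c.support) :
    ∃ (b' : V) (t₁ : G.Walk z b') (t₂ : G.Walk b' b),
      b' ∈ c.support ∧ t₁.append t₂ = t ∧ ∀ v ∈ t₁.support.dropLast, v ∉ c.support := by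
  induction t with
  | nil => exact ⟨_, SimpleGraph.Walk.nil, SimpleGraph.Walk.nil, hb, rfl, by simp⟩
  | @cons z w b h t ih =>
    by_cases hz : z ∈ c.support
    · exact ⟨z, SimpleGraph.Walk.nil, SimpleGraph.Walk.cons h t, hz, rfl, by simp⟩
    · obtain ⟨b', t₁, t₂, hb', ht, hnot⟩ := ih hb
      refine ⟨b', SimpleGraph.Walk.cons h t₁, t₂, hb', by rw [SimpleGraph.Walk.cons_append, ht], ?_⟩
      rw [dropLast_support_cons]
      intro v hv
      rw [List.mem_cons] at hv
      rcases hv with rfl | hv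
      · exact hz
      · exact hnot v hv

lemma ear_of_step {u0 z z₁ x' : V} (c : G.Walk u0 u0) (h : G.Adj z z₁) (t : G.Walk z₁ x')
    (ht : t.IsPath) (hzt : z ∉ t.support) (hz : z ∈ c.support) (hx : x' ∈ c.support)
    (hfe : s(z, z₁) ∉ c.edges) : ExistsEar c := by
  obtain ⟨b', t₁, t₂, hb', happ, hnot⟩ := exists_prefix_to_support c t hx
  have ht' := ht
  rw [← happ] at ht'
  have ht₁ : t₁.IsPath := ht'.of_append_left
  have hzt₁ : z ∉ t₁.support := fun hmem => hzt (by
    rw [← happ, SimpleGraph.Walk.mem_support_append_iff]; exact Or.inl hmem)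
  refine ⟨z, b', SimpleGraph.Walk.cons h t₁, ht₁.cons hzt₁, by simp, hz, hb', ?_, ?_⟩
  · intro g hg
    rw [SimpleGraph.Walk.edges_cons, List.mem_cons] at hg
    rcases hg with rfl | hg
    · exact hfe
    · obtain ⟨x, hxg, hxdl⟩ := exists_mem_dropLast_of_mem_edges t₁ hg
      intro hgc
      exact hnot x hxdl (mem_support_of_mem_edges' _ hgc hxg)
  · intro v hv hvc
    rw [SimpleGraph.Walk.support_cons, List.mem_cons] at hv
    rcases hv with rfl | hv
    · exact Or.inl rfl
    · rcases mem_dropLast_or_end t₁ hv with h1 | rfl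
      · exact absurd hvc (hnot v h1)
      · exact Or.inr rfl

lemma ear_of_bad_edge {u0 : V} (c : G.Walk u0 u0) {z x' : V} (t : G.Walk z x')
    (ht : t.IsPath) (hz : z ∈ c.support) (hx : x' ∈ c.support)
    (hbad : ∃ g ∈ t.edges, g ∉ c.edges) : ExistsEar c := by
  induction t with
  | nil => obtain ⟨g, hg, -⟩ := hbad; simp at hg
  | @cons z w x' h t ih =>
    obtain ⟨htp, hzt⟩ := (SimpleGraph.Walk.cons_isPath_iff _ _).1 ht
    by_cases hfe : s(z, w) ∈ c.edges
    · have hw : w ∈ c.support := mem_support_of_mem_edges' c hfe (Sym2.mem_mk_right _ _)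
      obtain ⟨g, hg, hgc⟩ := hbad
      rw [SimpleGraph.Walk.edges_cons, List.mem_cons] at hg
      rcases hg with rfl | hg
      · exact absurd hfe hgc
      · exact ih htp hw hx ⟨g, hg, hgc⟩
    · exact ear_of_step c h t htp hzt hz hx hfe

lemma not_mem_takeUntil_of_end {z x' y : V} [DecidableEq V] (t : G.Walk z x') (ht : t.IsPath)
    (hy : y ∈ t.support) (hne : y ≠ x') : x' ∉ (t.takeUntil y hy).support := by
  intro hxmem
  have hspec := t.take_spec hy
  have hnd : t.support.Nodup := ht.support_nodup
  rw [← hspec, SimpleGraph.Walk.support_append, List.nodup_append] at hnd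
  refine hnd.2.2 x' hxmem x' ?_ rfl
  have hx' : x' ∈ (t.dropUntil y hy).support := SimpleGraph.Walk.end_mem_support _
  rw [SimpleGraph.Walk.support_eq_cons, List.mem_cons] at hx'
  rcases hx' with h1 | h1
  · exact absurd h1.symm hne
  · exact h1

lemma mem_support_tail_of_closed {v y : V} {d : G.Walk v v} (hnil : ¬ d.Nil)
    (hy : y ∈ d.support) : y ∈ d.support.tail := by
  cases d with
  | nil => simp at hnil
  | cons h q =>
    rw [SimpleGraph.Walk.support_cons, List.tail_cons]
    rw [SimpleGraph.Walk.support_cons, List.mem_cons] at hy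
    rcases hy with rfl | hy
    · exact q.end_mem_support
    · exact hy


lemma tail_support_nodup {a b : V} {p : G.Walk a b} (hp : p.IsPath) :
    p.support.tail.Nodup := by
  have h := hp.support_nodup
  rw [SimpleGraph.Walk.support_eq_cons] at h
  exact (List.nodup_cons.mp h).2

lemma start_not_mem_tail_support {a b : V} {p : G.Walk a b} (hp : p.IsPath) :
    a ∉ p.support.tail := by
  have h := hp.support_nodup
  rw [SimpleGraph.Walk.support_eq_cons] at h
  exact (List.nodup_cons.mp h).1

lemma no_ear_core {u0 a' b' : V} [DecidableEq V] (c : G.Walk u0 u0) (c₄ : G.Walk a' a')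
    (hc₄ : c₄.IsCycle)
    (hsup : ∀ w ∈ c₄.support, w ∈ c.support) (hedg : ∀ g ∈ c₄.edges, g ∈ c.edges)
    (hb4 : b' ∈ c₄.support) (hab : a' ≠ b')
    (H : G.Walk a' b') (hH : H.IsPath) (hlen : 1 ≤ H.length)
    (hHe : ∀ g ∈ H.edges, g ∉ c.edges) (hHs : ∀ v ∈ H.support, v ∈ c.support → v = a' ∨ v = b')
    (hodd : ∀ (w : V) (p : G.Walk w w), p.IsCycle → ¬ Even p.length) : False := by
  cases c₄ with
  | nil => exact hc₄.ne_nil rfl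
  | @cons _ z₃ _ h₃ q₃ =>
    obtain ⟨hq₃, hs₃⟩ := (SimpleGraph.Walk.cons_isCycle_iff _ _).1 hc₄
    have hbq : b' ∈ q₃.support := by
      rw [SimpleGraph.Walk.support_cons, List.mem_cons] at hb4
      exact hb4.resolve_left fun h => hab h.symm
    have hspec : (q₃.takeUntil b' hbq).append (q₃.dropUntil b' hbq) = q₃ := q₃.take_spec hbq
    set t₁ := q₃.takeUntil b' hbq with ht₁def
    set t₂ := q₃.dropUntil b' hbq with ht₂def
    have ht₁ : t₁.IsPath := hq₃.takeUntil hbq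
    have ht₂ : t₂.IsPath := hq₃.dropUntil hbq
    have hat₁ : a' ∉ t₁.support := not_mem_takeUntil_of_end q₃ hq₃ hbq hab.symm
    have hq₃sub : ∀ w ∈ q₃.support, w ∈ c.support := fun w hw =>
      hsup w (by rw [SimpleGraph.Walk.support_cons]; exact List.mem_cons_of_mem _ hw)
    have ht₁sub : ∀ w ∈ t₁.support, w ∈ c.support := fun w hw => hq₃sub w (by
      rw [← hspec, SimpleGraph.Walk.mem_support_append_iff]; exact Or.inl hw)
    have ht₂sub : ∀ w ∈ t₂.support, w ∈ c.support := fun w hw => hq₃sub w (by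
      rw [← hspec, SimpleGraph.Walk.mem_support_append_iff]; exact Or.inr hw)
    have ht₁edge : ∀ g ∈ t₁.edges, g ∈ c.edges := fun g hg =>
      hedg g (by
        rw [SimpleGraph.Walk.edges_cons]
        exact List.mem_cons_of_mem _ (q₃.edges_takeUntil_subset hbq hg))
    have ht₂edge : ∀ g ∈ t₂.edges, g ∈ c.edges := fun g hg =>
      hedg g (by
        rw [SimpleGraph.Walk.edges_cons]
        exact List.mem_cons_of_mem _ (q₃.edges_dropUntil_subset hbq hg))
    have hfirstedge : s(a', z₃) ∈ c.edges := hedg _ (by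
      rw [SimpleGraph.Walk.edges_cons]; exact List.mem_cons_self)
    -- the first combined cycle
    have hW1 : (SimpleGraph.Walk.cons h₃ (t₁.append H.reverse)).IsCycle := by
      rw [SimpleGraph.Walk.isCycle_def]
      refine ⟨?_, by simp, ?_⟩
      · rw [SimpleGraph.Walk.isTrail_def, SimpleGraph.Walk.edges_cons,
          SimpleGraph.Walk.edges_append, List.nodup_cons, List.mem_append, List.nodup_append]
        refine ⟨?_, ht₁.isTrail.edges_nodup, ?_, ?_⟩
        · rintro (h1 | h1)
          · exact hs₃ (q₃.edges_takeUntil_subset hbq h1)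
          · rw [SimpleGraph.Walk.edges_reverse, List.mem_reverse] at h1
            exact hHe _ h1 hfirstedge
        · rw [SimpleGraph.Walk.edges_reverse, List.nodup_reverse]
          exact hH.isTrail.edges_nodup
        · intro g hg1 g' hg2 hgg
          rw [← hgg] at hg2
          rw [SimpleGraph.Walk.edges_reverse, List.mem_reverse] at hg2
          exact hHe _ hg2 (ht₁edge _ hg1)
      · rw [SimpleGraph.Walk.support_cons, List.tail_cons, SimpleGraph.Walk.support_append,
          List.nodup_append]
        refine ⟨ht₁.support_nodup, tail_support_nodup hH.reverse, ?_⟩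
        intro v hv1 v' hv2 hvv
        rw [← hvv] at hv2
        have hvH : v ∈ H.support := by
          have := List.mem_of_mem_tail hv2
          rwa [SimpleGraph.Walk.support_reverse, List.mem_reverse] at this
        rcases hHs v hvH (ht₁sub v hv1) with rfl | rfl
        · exact hat₁ hv1
        · exact start_not_mem_tail_support hH.reverse hv2
    -- the second combined cycle
    have hW2 : (H.append t₂).IsCycle := by
      rw [SimpleGraph.Walk.isCycle_def]
      refine ⟨?_, ?_, ?_⟩
      · rw [SimpleGraph.Walk.isTrail_def, SimpleGraph.Walk.edges_append, List.nodup_append]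
        refine ⟨hH.isTrail.edges_nodup, ht₂.isTrail.edges_nodup, ?_⟩
        intro g hg1 g' hg2 hgg
        rw [← hgg] at hg2
        exact hHe _ hg1 (ht₂edge _ hg2)
      · intro hn
        have := congrArg SimpleGraph.Walk.length hn
        rw [SimpleGraph.Walk.length_append] at this
        simp only [SimpleGraph.Walk.length_nil] at this
        omega
      · rw [SimpleGraph.Walk.support_append, SimpleGraph.Walk.support_eq_cons H,
          List.cons_append, List.tail_cons, List.nodup_append]
        refine ⟨tail_support_nodup hH, tail_support_nodup ht₂, ?_⟩
        intro v hv1 v' hv2 hvv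
        rw [← hvv] at hv2
        have hvH : v ∈ H.support := List.mem_of_mem_tail hv1
        have hvc : v ∈ c.support := ht₂sub v (List.mem_of_mem_tail hv2)
        rcases hHs v hvH hvc with rfl | rfl
        · exact start_not_mem_tail_support hH hv1
        · exact start_not_mem_tail_support ht₂ hv2
    have h1 := hodd _ _ hW1
    have h2 := hodd _ _ hW2
    have h3 := hodd _ _ hc₄
    rw [SimpleGraph.Walk.length_cons, SimpleGraph.Walk.length_append,
      SimpleGraph.Walk.length_reverse] at h1
    rw [SimpleGraph.Walk.length_append] at h2
    have hq₃len : q₃.length = t₁.length + t₂.length := by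
      rw [← hspec, SimpleGraph.Walk.length_append]
    rw [SimpleGraph.Walk.length_cons, hq₃len] at h3
    rw [Nat.not_even_iff] at h1 h2 h3
    omega

lemma no_ear {u0 : V} {c : G.Walk u0 u0} (hc : c.IsCycle)
    (hodd : ∀ (w : V) (p : G.Walk w w), p.IsCycle → ¬ Even p.length) :
    ¬ ExistsEar c := by
  classical
  rintro ⟨a', b', H, hH, hlen, ha', hb', hHe, hHs⟩
  have hab : a' ≠ b' := by
    rintro rfl
    rw [SimpleGraph.Walk.isPath_iff_eq_nil] at hH
    subst hH
    simp at hlen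
  have hc₄ : (c.rotate a' ha').IsCycle := hc.rotate ha'
  have hsup : ∀ w ∈ (c.rotate a' ha').support, w ∈ c.support := by
    intro w hw
    have h1 : w ∈ (c.rotate a' ha').support.tail := mem_support_tail_of_closed hc₄.not_nil hw
    have h2 : w ∈ c.support.tail := (SimpleGraph.Walk.support_rotate c a' ha').mem_iff.1 h1
    exact List.mem_of_mem_tail h2
  have hedg : ∀ g ∈ (c.rotate a' ha').edges, g ∈ c.edges := fun g hg =>
    (SimpleGraph.Walk.rotate_edges c a' ha').mem_iff.1 hg
  have hb4 : b' ∈ (c.rotate a' ha').support := by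
    have h1 : b' ∈ c.support.tail := mem_support_tail_of_closed hc.not_nil hb'
    exact List.mem_of_mem_tail ((SimpleGraph.Walk.support_rotate c a' ha').mem_iff.2 h1)
  exact no_ear_core c (c.rotate a' ha') hc₄ hsup hedg hb4 hab H hH hlen hHe hHs hodd

lemma exists_ear_aux {u0 x : V} (c : G.Walk u0 u0) (d₂ : G.Walk x x) (hd₂ : d₂.IsCycle)
    (hxc : x ∈ c.support) {y : V} (hyc : y ∈ c.support) (hxy : x ≠ y) (hyd : y ∈ d₂.support)
    {f : Sym2 V} (hfd : f ∈ d₂.edges) (hfc : f ∉ c.edges) : ExistsEar c := by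
  classical
  cases d₂ with
  | nil => simp at hfd
  | @cons _ z₀ _ h₀ t₀ =>
    obtain ⟨ht₀, he₀⟩ := (SimpleGraph.Walk.cons_isCycle_iff _ _).1 hd₂
    by_cases hfe : s(x, z₀) ∈ c.edges
    · have hz₀ : z₀ ∈ c.support := mem_support_of_mem_edges' c hfe (Sym2.mem_mk_right _ _)
      rw [SimpleGraph.Walk.edges_cons, List.mem_cons] at hfd
      rcases hfd with rfl | hfd
      · exact absurd hfe hfc
      · exact ear_of_bad_edge c t₀ ht₀ hz₀ hxc ⟨f, hfd, hfc⟩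
    · have hyt : y ∈ t₀.support := by
        rw [SimpleGraph.Walk.support_cons, List.mem_cons] at hyd
        exact hyd.resolve_left fun h => hxy h.symm
      have hxt : x ∉ (t₀.takeUntil y hyt).support :=
        not_mem_takeUntil_of_end t₀ ht₀ hyt hxy.symm
      exact ear_of_step c h₀ (t₀.takeUntil y hyt) (ht₀.takeUntil hyt) hxt hxc hyc hfe

lemma ear_exists {u v x y : V} (c : G.Walk u u) (d : G.Walk v v) (hd : d.IsCycle)
    (hxc : x ∈ c.support) (hyc : y ∈ c.support) (hxy : x ≠ y)
    (hxd : x ∈ d.support) (hyd : y ∈ d.support)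
    {f : Sym2 V} (hfd : f ∈ d.edges) (hfc : f ∉ c.edges) : ExistsEar c := by
  classical
  have hd₂ : (d.rotate x hxd).IsCycle := hd.rotate hxd
  have hfd₂ : f ∈ (d.rotate x hxd).edges := (SimpleGraph.Walk.rotate_edges d x hxd).mem_iff.2 hfd
  have hyd₂ : y ∈ (d.rotate x hxd).support := by
    have h1 : y ∈ d.support.tail := mem_support_tail_of_closed hd.not_nil hyd
    exact List.mem_of_mem_tail ((SimpleGraph.Walk.support_rotate d x hxd).mem_iff.2 h1)
  exact exists_ear_aux c (d.rotate x hxd) hd₂ hxc hyc hxy hyd₂ hfd₂ hfc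

lemma oneside {u v x y : V} (c : G.Walk u u) (d : G.Walk v v)
    (hc : c.IsCycle) (hd : d.IsCycle)
    (hodd : ∀ (w : V) (p : G.Walk w w), p.IsCycle → ¬ Even p.length)
    (hxc : x ∈ c.support) (hyc : y ∈ c.support) (hxy : x ≠ y)
    (hxd : x ∈ d.support) (hyd : y ∈ d.support) :
    ∀ f ∈ d.edges, f ∈ c.edges := by
  intro f hfd
  by_contra hfc
  exact no_ear hc hodd (ear_exists c d hd hxc hyc hxy hxd hyd hfd hfc)

end OddCycleAux



/-- In a graph with no even cycle any two cycles sharing an edge have the same edge set,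
i.e. distinct cycles are edge-disjoint. -/
theorem odd_cycle_graph_cycles_edge_disjoint {V : Type*} [Fintype V] (G : SimpleGraph V)
    (hodd : ∀ (u : V) (c : G.Walk u u), c.IsCycle → ¬ Even c.length)
    (u v : V) (c : G.Walk u u) (d : G.Walk v v) (hc : c.IsCycle) (hd : d.IsCycle)
    (e : Sym2 V) (hec : e ∈ c.edges) (hed : e ∈ d.edges) :
    ∀ f : Sym2 V, f ∈ c.edges ↔ f ∈ d.edges := by
  revert hec hed
  induction e with
  | _ x y =>
    intro hec hed
    have hadj : G.Adj x y := c.adj_of_mem_edges hec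
    have hxy : x ≠ y := hadj.ne
    have hxc := c.fst_mem_support_of_mem_edges hec
    have hyc := c.snd_mem_support_of_mem_edges hec
    have hxd := d.fst_mem_support_of_mem_edges hed
    have hyd := d.snd_mem_support_of_mem_edges hed
    intro f
    exact ⟨fun h => OddCycleAux.oneside d c hd hc hodd hxd hyd hxy hxc hyc f h,
           fun h => OddCycleAux.oneside c d hc hd hodd hxc hyc hxy hxd hyd f h⟩
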